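/- Let $p \in \mathbb{T}^{\binom{[n]}{m}}$ (where $\mathbb{T} = \mathbb{R} \cup \{-\infty\}$) be the coordinatewise valuation of the Plücker vector of an $m$-dimensional subspace $W$ of $K^n$, where $K$ is a valued field. Then $p$ satisfies the tropical Plücker relations: for every $A \in \binom{[n]}{m-1}$ and $B \in \binom{[n]}{m+1}$, the maximum $\max_{i \in B \setminus A}(p_{A\cup i} + p_{B\setminus i})$ is attained at least twice, or equals $-\infty$. -/
import Mathlib


open Matrix Finset

/-- The maximal minor of an `m × n` matrix on the column set `I` (columns in increasing
order); junk value `0` if `I` does not have exactly `m` elements. -/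
noncomputable def minor {K : Type*} [Field K] {m n : ℕ}
    (M : Matrix (Fin m) (Fin n) K) (I : Finset (Fin n)) : K :=
  if h : I.card = m then (M.submatrix id (fun k => (I.orderIsoOfFin h k : Fin n))).det
  else 0

/-- valuation of a det whose columns are an injection into `I` equals valuation of the minor. -/
lemma val_det_eq {K : Type*} [Field K] {Γ₀ : Type*} [LinearOrderedCommGroupWithZero Γ₀]
    (v : Valuation K Γ₀) {m n : ℕ} (M : Matrix (Fin m) (Fin n) K)
    {I : Finset (Fin n)} (h : I.card = m) (f : Fin m → Fin n)
    (hf : ∀ k, f k ∈ I) (hinj : Function.Injective f) :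
    v (M.submatrix id f).det = v (minor M I) := by
  set e := I.orderIsoOfFin h with he
  have hσinj : Function.Injective (fun k => e.symm ⟨f k, hf k⟩) := by
    intro x y hxy
    apply hinj
    have := congrArg (fun z => (e z : Fin n)) hxy
    simpa using this
  let σ : Equiv.Perm (Fin m) :=
    Equiv.ofBijective _ ((Finite.injective_iff_bijective).mp hσinj)
  have hfeq : ∀ k, f k = ((e (σ k) : Fin n)) := by
    intro k
    show f k = ((e (e.symm ⟨f k, hf k⟩) : Fin n))
    simp
  have hsub : M.submatrix id f =
      (M.submatrix id (fun k => (e k : Fin n))).submatrix id σ := by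
    ext i j
    simp [Matrix.submatrix_apply, hfeq j]
  have hminor : minor M I = (M.submatrix id (fun k => (e k : Fin n))).det := by
    rw [minor, dif_pos h]
  rw [hsub, Matrix.det_permute', hminor]
  rcases Int.units_eq_one_or (Equiv.Perm.sign σ) with hs | hs <;>
    simp [hs, Valuation.map_neg]

/-- If a finite sum vanishes, then either all terms have valuation zero, or the maximal
valuation is attained at least twice. -/
lemma val_sum_zero {K : Type*} [Field K] {Γ₀ : Type*} [LinearOrderedCommGroupWithZero Γ₀]
    (v : Valuation K Γ₀) {ι : Type*} [DecidableEq ι] (S : Finset ι) (f : ι → K)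
    (hsum : ∑ i ∈ S, f i = 0) :
    (∀ i ∈ S, v (f i) = 0) ∨
      ∃ i ∈ S, ∃ j ∈ S, i ≠ j ∧ v (f i) = v (f j) ∧ ∀ l ∈ S, v (f l) ≤ v (f i) := by
  by_cases hall : ∀ i ∈ S, v (f i) = 0
  · exact Or.inl hall
  push_neg at hall
  obtain ⟨s, hs, hvs⟩ := hall
  obtain ⟨i, hi, hmax⟩ := S.exists_max_image (fun i => v (f i)) ⟨s, hs⟩
  have hvi : v (f i) ≠ 0 := by
    intro h
    exact hvs (le_antisymm (h ▸ hmax s hs) zero_le')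
  have herase : ∑ j ∈ S.erase i, f j = - f i := by
    have h1 : f i + ∑ j ∈ S.erase i, f j = 0 := by
      rw [Finset.add_sum_erase S f hi, hsum]
    linear_combination h1
  have hex : ∃ j ∈ S.erase i, v (f i) ≤ v (f j) := by
    by_contra hcon
    push_neg at hcon
    have hlt := v.map_sum_lt hvi hcon
    rw [herase, Valuation.map_neg] at hlt
    exact lt_irrefl _ hlt
  obtain ⟨j, hj, hle⟩ := hex
  refine Or.inr ⟨i, hi, j, Finset.mem_of_mem_erase hj, (Finset.ne_of_mem_erase hj).symm,
    le_antisymm hle (hmax j (Finset.mem_of_mem_erase hj)), hmax⟩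

/-- The classical Plücker relation, up to signs, for arbitrary column selections. -/
lemma plucker_sum {K : Type*} [Field K] {m n : ℕ}
    (M : Matrix (Fin (m + 1)) (Fin n) K) (a : Fin m → Fin n) (b : Fin (m + 2) → Fin n) :
    ∑ j : Fin (m + 2), (-1 : K) ^ (m + 1 + (j : ℕ)) *
      (M.submatrix id (Fin.snoc a (b j))).det *
      (M.submatrix id (fun q => b (j.succAbove q))).det = 0 := by
  set c : Fin (m + 1) → K :=
    fun i => (-1 : K) ^ ((i : ℕ) + m) * (M.submatrix i.succAbove a).det with hc
  have hglin : ∀ x : Fin n, (M.submatrix id (Fin.snoc a x)).det =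
      ∑ i : Fin (m + 1), c i * M i x := by
    intro x
    rw [Matrix.det_succ_column (M.submatrix id (Fin.snoc a x)) (Fin.last m)]
    refine Finset.sum_congr rfl fun i _ => ?_
    have hsub : (M.submatrix id (Fin.snoc a x)).submatrix i.succAbove
        (Fin.last m).succAbove = M.submatrix i.succAbove a := by
      ext p q
      simp [Matrix.submatrix_apply, Fin.succAbove_last, Fin.snoc_castSucc]
    rw [hsub]
    simp only [Matrix.submatrix_apply, id, Fin.snoc_last, Fin.val_last, hc]
    ring
  set D : Matrix (Fin (m + 2)) (Fin (m + 2)) K :=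
    Matrix.of (Fin.snoc (fun i j => M i (b j)) 0) with hD
  set C : Matrix (Fin (m + 2)) (Fin (m + 2)) K :=
    D.updateRow (Fin.last (m + 1)) (fun j => (M.submatrix id (Fin.snoc a (b j))).det) with hCdef
  have hrow : (fun j => (M.submatrix id (Fin.snoc a (b j))).det) =
      ∑ k : Fin (m + 2), (Fin.snoc c 0 : Fin (m + 2) → K) k • D k := by
    funext j
    rw [Finset.sum_apply]
    rw [Fin.sum_univ_castSucc]
    simp only [Fin.snoc_last, Fin.snoc_castSucc, Pi.smul_apply, smul_eq_mul, zero_mul, add_zero,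
      hD, Matrix.of_apply]
    rw [hglin (b j)]
  have hCdet : C.det = 0 := by
    rw [hCdef, hrow, Matrix.det_updateRow_sum]
    simp
  have hexp := Matrix.det_succ_row C (Fin.last (m + 1))
  rw [hCdet] at hexp
  rw [show (0 : K) = ∑ j : Fin (m+2), (-1:K) ^ ((Fin.last (m+1) : ℕ) + (j:ℕ)) * C (Fin.last (m+1)) j *
      (C.submatrix (Fin.last (m+1)).succAbove j.succAbove).det from hexp]
  refine Finset.sum_congr rfl fun j _ => ?_
  have h1 : C (Fin.last (m + 1)) j = (M.submatrix id (Fin.snoc a (b j))).det := by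
    rw [hCdef]; simp
  have h2 : C.submatrix (Fin.last (m + 1)).succAbove j.succAbove =
      M.submatrix id (fun q => b (j.succAbove q)) := by
    ext p q
    rw [hCdef]
    simp only [Matrix.submatrix_apply, Fin.succAbove_last]
    rw [Matrix.updateRow_ne (Fin.castSucc_lt_last p).ne]
    simp [hD, Fin.snoc_castSucc]
  rw [h1, h2, Fin.val_last]

/-- the coordinatewise valuation of the Plücker vector of an
`m`-dimensional subspace (given as the rowspace of the rank-`m` matrix `M`) satisfies
the tropical Plücker relations: for all `A` of size `m-1` and `B` of size `m+1`, the
maximum of the values `v(P_{A∪i}) · v(P_{B∖i})` over `i ∈ B \ A` is attained at least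
twice, or all terms are `0` (multiplicative notation: the tropical `-∞` is the
valuation value `0`, and `+` of tropical numbers is `*` of valuation values). -/
theorem tropical_plucker_relations
    (K : Type*) [Field K] (Γ₀ : Type*) [LinearOrderedCommGroupWithZero Γ₀]
    (v : Valuation K Γ₀) (m n : ℕ) (hm : m ≤ n)
    (M : Matrix (Fin m) (Fin n) K) (hM : M.rank = m)
    (A B : Finset (Fin n)) (hA : A.card + 1 = m) (hB : B.card = m + 1) :
    (∀ i ∈ B \ A, v (minor M (insert i A)) * v (minor M (B.erase i)) = 0) ∨
    ∃ i ∈ B \ A, ∃ j ∈ B \ A, i ≠ j ∧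
      v (minor M (insert i A)) * v (minor M (B.erase i)) =
        v (minor M (insert j A)) * v (minor M (B.erase j)) ∧
      ∀ l ∈ B \ A, v (minor M (insert l A)) * v (minor M (B.erase l)) ≤
        v (minor M (insert i A)) * v (minor M (B.erase i)) := by
  clear hm hM
  obtain ⟨m, rfl⟩ : ∃ m', m = m' + 1 := ⟨A.card, hA.symm⟩
  have hA' : A.card = m := by omega
  have hB' : B.card = m + 2 := by omega
  set e := B.orderIsoOfFin hB' with he
  set a : Fin m → Fin n := fun k => (A.orderIsoOfFin hA' k : Fin n) with ha
  set b : Fin (m + 2) → Fin n := fun k => (e k : Fin n) with hb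
  have ha_inj : Function.Injective a := fun x y hxy =>
    (A.orderIsoOfFin hA').injective (Subtype.ext hxy)
  have hb_inj : Function.Injective b := fun x y hxy =>
    e.injective (Subtype.ext hxy)
  have ha_mem : ∀ k, a k ∈ A := fun k => (A.orderIsoOfFin hA' k).2
  have hb_mem : ∀ k, b k ∈ B := fun k => (e k).2
  have hsnoc_inj : ∀ x : Fin n, x ∉ A →
      Function.Injective (Fin.snoc a x : Fin (m + 1) → Fin n) := by
    intro x hx p q hpq
    rcases Fin.eq_castSucc_or_eq_last p with ⟨p', rfl⟩ | rfl <;>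
      rcases Fin.eq_castSucc_or_eq_last q with ⟨q', rfl⟩ | rfl
    · rw [Fin.snoc_castSucc, Fin.snoc_castSucc] at hpq
      exact congrArg Fin.castSucc (ha_inj hpq)
    · rw [Fin.snoc_castSucc, Fin.snoc_last] at hpq
      exact absurd (hpq ▸ ha_mem p') hx
    · rw [Fin.snoc_last, Fin.snoc_castSucc] at hpq
      exact absurd (by rw [hpq]; exact ha_mem q') hx
    · rfl
  set F : Fin (m + 2) → K := fun j => (-1 : K) ^ (m + 1 + (j : ℕ)) *
      (M.submatrix id (Fin.snoc a (b j))).det *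
      (M.submatrix id (fun q => b (j.succAbove q))).det with hF
  have hFsum : ∑ j, F j = 0 := plucker_sum M a b
  have hFzero : ∀ j, b j ∈ A → F j = 0 := by
    intro j hj
    have hak : a ((A.orderIsoOfFin hA').symm ⟨b j, hj⟩) = b j := by
      rw [ha]
      simp
    have hz : (M.submatrix id (Fin.snoc a (b j))).det = 0 := by
      apply Matrix.det_zero_of_column_eq
        (i := Fin.castSucc ((A.orderIsoOfFin hA').symm ⟨b j, hj⟩)) (j := Fin.last m)
        (Fin.castSucc_lt_last _).ne
      intro r
      simp [Matrix.submatrix_apply, Fin.snoc_castSucc, Fin.snoc_last, hak]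
    rw [hF]
    simp [hz]
  have hFval : ∀ j, b j ∉ A →
      v (F j) = v (minor M (insert (b j) A)) * v (minor M (B.erase (b j))) := by
    intro j hj
    rw [hF]
    simp only []
    rw [Valuation.map_mul, Valuation.map_mul, Valuation.map_pow]
    have hneg : v (-1 : K) = 1 := by
      rw [show (-1 : K) = -(1 : K) from rfl, Valuation.map_neg, Valuation.map_one]
    rw [hneg, one_pow, one_mul]
    congr 1
    · refine val_det_eq v M ?_ _ ?_ (hsnoc_inj _ hj)
      · rw [Finset.card_insert_of_notMem hj, hA']
      · intro k
        refine Fin.lastCases ?_ ?_ k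
        · rw [Fin.snoc_last]
          exact Finset.mem_insert_self _ _
        · intro k'
          rw [Fin.snoc_castSucc]
          exact Finset.mem_insert_of_mem (ha_mem k')
    · refine val_det_eq v M ?_ _ ?_ ?_
      · rw [Finset.card_erase_of_mem (hb_mem j), hB']; omega
      · intro q
        refine Finset.mem_erase.mpr ⟨fun hcon => ?_, hb_mem _⟩
        exact (Fin.succAbove_ne j q) (hb_inj hcon)
      · exact fun x y hxy => (Fin.succAbove_right_injective (p := j)) (hb_inj hxy)
  set f' : Fin n → K := fun i => if h : i ∈ B then F (e.symm ⟨i, h⟩) else 0 with hf'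
  have hfb : ∀ j, f' (b j) = F j := by
    intro j
    rw [hf']
    simp only []
    rw [dif_pos (hb_mem j)]
    congr 1
    have : (⟨b j, hb_mem j⟩ : {x // x ∈ B}) = e j := Subtype.ext rfl
    rw [this, OrderIso.symm_apply_apply]
  have hbsymm : ∀ i (h : i ∈ B), b (e.symm ⟨i, h⟩) = i := by
    intro i h
    rw [hb]
    simp
  have hsumB : ∑ i ∈ B, f' i = 0 := by
    rw [← Finset.sum_coe_sort B f', ← Equiv.sum_comp e.toEquiv (fun x : {x // x ∈ B} => f' x),
      ← hFsum]
    exact Finset.sum_congr rfl fun j _ => hfb j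
  have hsum' : ∑ i ∈ B \ A, f' i = 0 := by
    have hsplit := Finset.sum_sdiff (f := f') (Finset.inter_subset_left (s₁ := B) (s₂ := A))
    rw [Finset.sdiff_inter_self_left] at hsplit
    have hzero : ∑ i ∈ B ∩ A, f' i = 0 := by
      refine Finset.sum_eq_zero fun i hi => ?_
      obtain ⟨hiB, hiA⟩ := Finset.mem_inter.mp hi
      rw [hf']
      simp only []
      rw [dif_pos hiB]
      exact hFzero _ (by rw [hbsymm i hiB]; exact hiA)
    rw [← hsumB, ← hsplit, hzero, add_zero]
  have hval : ∀ i ∈ B \ A, v (f' i) = v (minor M (insert i A)) * v (minor M (B.erase i)) := by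
    intro i hi
    obtain ⟨hiB, hiA⟩ := Finset.mem_sdiff.mp hi
    have h1 : f' i = F (e.symm ⟨i, hiB⟩) := by rw [hf']; simp only []; rw [dif_pos hiB]
    rw [h1, hFval _ (by rw [hbsymm i hiB]; exact hiA), hbsymm i hiB]
  rcases val_sum_zero v (B \ A) f' hsum' with h | ⟨i, hi, j, hj, hne, heq, hmax⟩
  · exact Or.inl fun i hi => by rw [← hval i hi]; exact h i hi
  · exact Or.inr ⟨i, hi, j, hj, hne,
      by rw [← hval i hi, ← hval j hj]; exact heq,
      fun l hl => by rw [← hval l hl, ← hval i hi]; exact hmax l hl⟩
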